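/- Let R be a Noetherian local domain with total quotient ring Q, I a nonzero ideal. The natural ring map R → End_R(I) is injective, End_R(I) is commutative, and the induced surjection I ⊗_R I → I ⊗_{End_R(I)} I has torsion kernel; consequently, if I ⊗_R I is torsion-free, then I ⊗_R I ≅ I ⊗_{End_R(I)} I. -/

import Mathlib

open TensorProduct

/-- Let `R` be a Noetherian local domain and `I` a nonzero ideal. Then the
natural ring map `R → End_R(I)` is injective, `End_R(I)` is commutative, the
kernel of the natural surjection `I ⊗_R I → I ⊗_{End_R(I)} I` (the submodule of
balancing relations) is torsion; consequently if `I ⊗_R I` is torsion-free this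
submodule vanishes and the surjection is an isomorphism. -/
theorem stmt_18 (R : Type*) [CommRing R] [IsDomain R] [IsNoetherianRing R]
    [IsLocalRing R] (I : Ideal R) (hI : I ≠ ⊥) :
    Function.Injective (algebraMap R (Module.End R I)) ∧
    (∀ f g : Module.End R I, f * g = g * f) ∧
    (∀ z ∈ Submodule.span R
        {w : I ⊗[R] I | ∃ (f : Module.End R I) (x y : I),
          w = (f x) ⊗ₜ[R] y - x ⊗ₜ[R] (f y)},
      ∃ r : R, r ≠ 0 ∧ r • z = 0) ∧
    (NoZeroSMulDivisors R (I ⊗[R] I) →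
      Submodule.span R
        {w : I ⊗[R] I | ∃ (f : Module.End R I) (x y : I),
          w = (f x) ⊗ₜ[R] y - x ⊗ₜ[R] (f y)} = ⊥) := by
  obtain ⟨a, haI, ha0⟩ := Submodule.exists_mem_ne_zero_of_ne_bot hI
  set α : I := ⟨a, haI⟩ with hα
  -- the key identity: a • f x = (f a) • x
  have key : ∀ (f : Module.End R I) (x : I), a • f x = ((f α : R)) • x := by
    intro f x
    have h1 : a • x = (x : R) • α := Subtype.ext (by simp [hα, mul_comm])
    calc a • f x = f (a • x) := (map_smul f a x).symm
      _ = (x : R) • f α := by rw [h1, map_smul]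
      _ = ((f α : R)) • x := Subtype.ext (by simp [mul_comm])
  have hasmul : ∀ z ∈ Submodule.span R
      {w : I ⊗[R] I | ∃ (f : Module.End R I) (x y : I),
        w = (f x) ⊗ₜ[R] y - x ⊗ₜ[R] (f y)}, a • z = 0 := by
    intro z hz
    induction hz using Submodule.span_induction with
    | mem w hw =>
        obtain ⟨f, x, y, rfl⟩ := hw
        rw [smul_sub, TensorProduct.smul_tmul', key, ← TensorProduct.tmul_smul,
          key, TensorProduct.smul_tmul, sub_self]
    | zero => simp
    | add u v _ _ hu hv => rw [smul_add, hu, hv, add_zero]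
    | smul r u _ hu => rw [smul_comm, hu, smul_zero]
  refine ⟨?_, ?_, ?_, ?_⟩
  · intro r s hrs
    have h := congrArg (fun φ : Module.End R I => (φ α : R)) hrs
    simp only [Module.algebraMap_end_apply] at h
    have h' : r * a = s * a := by simpa only [Submodule.coe_smul, smul_eq_mul] using h
    exact mul_right_cancel₀ ha0 h'
  · intro f g
    refine LinearMap.ext fun x => ?_
    have haa : a * a ≠ 0 := mul_ne_zero ha0 ha0
    have l : ∀ f g : Module.End R I, a • a • f (g x) = ((f α : R) * (g α : R)) • x := by
      intro f g
      rw [key f (g x), smul_comm, key g x, smul_smul]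
    have : (a * a) • (f * g) x = (a * a) • (g * f) x := by
      simp only [Module.End.mul_apply, mul_smul]
      rw [l f g, l g f, mul_comm]
    exact smul_right_injective I haa this
  · intro z hz
    exact ⟨a, ha0, hasmul z hz⟩
  · intro hnz
    rw [Submodule.eq_bot_iff]
    intro z hz
    have := hasmul z hz
    rcases smul_eq_zero.mp this with h | h
    · exact absurd h ha0
    · exact h
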